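/- The characteristic function of the product Z = W·X of two independent centered Gaussian random variables W ~ N(0, σ_w²) and X ~ N(0, σ_x²) is φ_Z(t) = (1 + σ_w² σ_x² t²)^(-1/2). -/

import Mathlib

open MeasureTheory ProbabilityTheory Complex
open scoped NNReal ENNReal

lemma integral_gaussianReal_smul {E : Type*} [NormedAddCommGroup E] [NormedSpace ℝ E]
    {v : ℝ≥0} (hv : v ≠ 0) (f : ℝ → E) :
    ∫ x, f x ∂(gaussianReal 0 v) = ∫ x, gaussianPDFReal 0 v x • f x := by
  rw [gaussianReal_of_var_ne_zero _ hv, gaussianPDF_def]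
  have : (fun x => ENNReal.ofReal (gaussianPDFReal 0 v x))
      = fun x => ((gaussianPDFReal 0 v x).toNNReal : ℝ≥0∞) := rfl
  rw [this, integral_withDensity_eq_integral_smul
    ((measurable_gaussianPDFReal 0 v).real_toNNReal) f]
  congr 1
  ext x
  rw [NNReal.smul_def, Real.coe_toNNReal _ (gaussianPDFReal_nonneg 0 v x)]

lemma integral_exp_neg_mul_sq_gaussianReal {v : ℝ≥0} (hv : 0 < v) {c : ℝ} (hc : 0 ≤ c) :
    ∫ x, Real.exp (-c * x ^ 2) ∂(gaussianReal 0 v) = (1 + 2 * c * v) ^ (-(1/2) : ℝ) := by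
  have hv' : (0:ℝ) < v := hv
  have hb : (0:ℝ) < (2*(v:ℝ))⁻¹ + c := by positivity
  rw [integral_gaussianReal_smul hv.ne']
  have h1 : ∀ x : ℝ, gaussianPDFReal 0 v x • Real.exp (-c * x ^ 2)
      = (Real.sqrt (2 * Real.pi * v))⁻¹ * Real.exp (-((2*(v:ℝ))⁻¹ + c) * x ^ 2) := by
    intro x
    rw [gaussianPDFReal, smul_eq_mul, mul_assoc, ← Real.exp_add]
    congr 2
    field_simp
    ring
  simp_rw [h1]
  rw [MeasureTheory.integral_const_mul, integral_gaussian]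
  rw [Real.rpow_neg (by positivity), ← Real.sqrt_eq_rpow]
  rw [← Real.sqrt_inv, ← Real.sqrt_inv, ← Real.sqrt_mul (by positivity)]
  congr 1
  have hπ := Real.pi_pos
  field_simp


lemma inner_gauss (σx : ℝ≥0) (hσx : 0 < σx) (t w : ℝ) :
    ∫ x, Complex.exp (Complex.I * t * (w * x)) ∂(gaussianReal 0 (σx ^ 2))
      = ((Real.exp (-((σx:ℝ)^2 * t^2 / 2) * w^2) : ℝ) : ℂ) := by
  set v : ℝ := (σx:ℝ)^2 with hv_def
  have hv : 0 < v := by positivity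
  have hπ := Real.pi_pos
  set b : ℂ := ((-(1/(2*v)) : ℝ) : ℂ) with hb_def
  have hbre : b.re < 0 := by
    simp only [hb_def, Complex.ofReal_re]
    rw [neg_lt, neg_zero]
    positivity
  rw [integral_gaussianReal_smul (by positivity : σx ^ 2 ≠ 0)]
  have h1 : ∀ x : ℝ, gaussianPDFReal 0 (σx ^ 2) x • Complex.exp (Complex.I * t * (w * x))
      = (((Real.sqrt (2 * Real.pi * v))⁻¹ : ℝ) : ℂ) *
        Complex.exp (b * x ^ 2 + (Complex.I * t * w) * x + 0) := by
    intro x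
    have hpdf : gaussianPDFReal 0 (σx ^ 2) x
        = (Real.sqrt (2 * Real.pi * v))⁻¹ * Real.exp (-(1/(2*v)) * x ^ 2) := by
      rw [gaussianPDFReal]
      push_cast
      rw [sub_zero]
      ring_nf
      rw [hv_def, inv_pow]
    rw [hpdf, mul_smul, Complex.real_smul, Complex.real_smul]
    congr 1
    rw [Complex.ofReal_exp, ← Complex.exp_add]
    congr 1
    rw [hb_def]
    push_cast
    ring
  simp_rw [h1]
  rw [MeasureTheory.integral_const_mul, integral_cexp_quadratic hbre]
  have e1 : ((Real.pi : ℂ) / -b) = ((2 * Real.pi * v : ℝ) : ℂ) := by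
    rw [hb_def]
    push_cast
    rw [neg_neg]
    field_simp
  have e2 : (((2 * Real.pi * v : ℝ)) : ℂ) ^ (1/2 : ℂ)
      = ((Real.sqrt (2 * Real.pi * v) : ℝ) : ℂ) := by
    rw [show ((1:ℂ)/2) = ((1/2 : ℝ) : ℂ) by norm_num,
      ← Complex.ofReal_cpow (by positivity), ← Real.sqrt_eq_rpow]
  have e3 : (0 : ℂ) - (Complex.I * t * w) ^ 2 / (4 * b)
      = ((-(v * t ^ 2 / 2) * w ^ 2 : ℝ) : ℂ) := by
    rw [hb_def]
    have : (Complex.I * t * w) ^ 2 = ((-(t^2 * w^2) : ℝ) : ℂ) := by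
      push_cast
      ring_nf
      rw [Complex.I_sq]
      ring
    rw [this]
    push_cast
    have h2v : ((-(1/(2*v)) : ℝ) : ℂ) ≠ 0 := by
      simp only [ne_eq, Complex.ofReal_eq_zero, neg_eq_zero]
      positivity
    field_simp
    ring
  rw [e1, e2, e3, ← Complex.ofReal_exp, ← mul_assoc, ← Complex.ofReal_mul,
    ← Complex.ofReal_mul]
  norm_cast
  rw [inv_mul_cancel₀ (by positivity), one_mul]

/-- The characteristic function of the product `Z = W * X` of two independent
centered Gaussian random variables `W ~ N(0, σw²)` and `X ~ N(0, σx²)` is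
`φ_Z(t) = (1 + σw² σx² t²)^(-1/2)`. -/
theorem charFun_prod_indep_gaussians
    {Ω : Type*} [MeasurableSpace Ω] (P : Measure Ω) [IsProbabilityMeasure P]
    (W X : Ω → ℝ) (hWm : Measurable W) (hXm : Measurable X)
    (σw σx : ℝ≥0) (hσw : 0 < σw) (hσx : 0 < σx)
    (hW : P.map W = gaussianReal 0 (σw ^ 2))
    (hX : P.map X = gaussianReal 0 (σx ^ 2))
    (hindep : IndepFun W X P) :
    ∀ t : ℝ,
      ∫ ω, Complex.exp (Complex.I * t * (W ω * X ω)) ∂P =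
        (((1 + (σw : ℝ) ^ 2 * (σx : ℝ) ^ 2 * t ^ 2) ^ (-(1 / 2) : ℝ) : ℝ) : ℂ) := by
  intro t
  have hmap : P.map (fun ω => (W ω, X ω))
      = (gaussianReal 0 (σw ^ 2)).prod (gaussianReal 0 (σx ^ 2)) := by
    rw [← hW, ← hX]
    exact (indepFun_iff_map_prod_eq_prod_map_map hWm.aemeasurable hXm.aemeasurable).mp hindep
  have hcont : Continuous fun p : ℝ × ℝ => Complex.exp (Complex.I * t * (p.1 * p.2)) := by
    fun_prop
  have h0 : ∫ ω, Complex.exp (Complex.I * t * (W ω * X ω)) ∂P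
      = ∫ p : ℝ × ℝ, Complex.exp (Complex.I * t * (p.1 * p.2))
          ∂((gaussianReal 0 (σw ^ 2)).prod (gaussianReal 0 (σx ^ 2))) := by
    rw [← hmap, integral_map (hWm.prodMk hXm).aemeasurable hcont.aestronglyMeasurable]
  rw [h0]
  have hint : Integrable (fun p : ℝ × ℝ => Complex.exp (Complex.I * t * (p.1 * p.2)))
      ((gaussianReal 0 (σw ^ 2)).prod (gaussianReal 0 (σx ^ 2))) := by
    refine (integrable_const (1 : ℝ)).mono' hcont.aestronglyMeasurable ?_
    filter_upwards with p
    have hre : (Complex.I * t * (p.1 * p.2)).re = 0 := by simp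
    rw [Complex.norm_exp, hre, Real.exp_zero]
  rw [MeasureTheory.integral_prod _ hint]
  simp_rw [inner_gauss σx hσx t]
  rw [show (fun x : ℝ => ((Real.exp (-((σx:ℝ) ^ 2 * t ^ 2 / 2) * x ^ 2) : ℝ) : ℂ))
      = fun x : ℝ => (RCLike.ofReal (K := ℂ)) (Real.exp (-((σx:ℝ) ^ 2 * t ^ 2 / 2) * x ^ 2))
      from rfl, integral_ofReal,
    integral_exp_neg_mul_sq_gaussianReal (by positivity) (by positivity : (0:ℝ) ≤ (σx:ℝ)^2 * t^2 / 2)]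
  rw [show (1 + 2 * ((σx:ℝ) ^ 2 * t ^ 2 / 2) * ((σw ^ 2 : ℝ≥0) : ℝ))
      = 1 + (σw:ℝ) ^ 2 * (σx:ℝ) ^ 2 * t ^ 2 by push_cast; ring]
  norm_num
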